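/- Let u_1, u_2 ∈ F_{2^n} with u_1·u_2^{2^m} ∈ K_m and Tr_{2^m/2}(u_1·u_2^{2^m}) = 0. Define F : F_{2^n} → F_{2^n} by F(x) = x^{2^m+1} + u_1·x·Tr_{2^n/2}(u_2x), where the F_2-value Tr_{2^n/2}(u_2x) is identified with 0 or 1 in F_{2^n}. Then for every β ∈ F_{2^n} with β ∉ K_m, the component function F_β is bent, and W_{F_β}(ω) = 2^m·(−1)^{F*_β(ω)} for all ω, where, with λ = β + β^{2^m}, F*_β(ω) = Tr_{2^m/2}(λ^{−1}ω^{2^m+1}) + 1 + (Tr_{2^n/2}(λ^{−1}(βu_1)^{2^m}ω) + Tr_{2^m/2}(λ^{−1}(βu_1)^{2^m+1}))·(Tr_{2^n/2}(λ^{−1}u_2^{2^m}ω) + Tr_{2^m/2}(λ^{−1}u_2^{2^m+1})). -/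

import Mathlib

open scoped Classical BigOperators

noncomputable section

/-- The finite field with `2^k` elements. -/
abbrev GF (k : ℕ) := GaloisField 2 k

noncomputable instance (k : ℕ) : Fintype (GF k) := Fintype.ofFinite _

/-- The absolute trace `Tr_{2^k/2}`, viewed as an element of `GF k`
(its values lie in the prime field `{0,1}`). -/
def atr (k : ℕ) (x : GF k) : GF k := ∑ j ∈ Finset.range k, x ^ 2 ^ j

/-- `(-1)^b` for `b ∈ {0,1} ⊆ GF k`. -/
def chi (k : ℕ) (x : GF k) : ℤ := if x = 0 then 1 else -1

/-- The Walsh transform of a Boolean-valued function `f` on `GF k`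
(`f` takes values in the prime field `{0,1}`). -/
def walsh (k : ℕ) (f : GF k → GF k) (ω : GF k) : ℤ :=
  ∑ x : GF k, chi k (f x + atr k (ω * x))

/-- The trace `Tr_{2^m/2}` of the subfield `K_m ⊆ GF (2*m)`, viewed inside `GF (2*m)`. -/
def trKm (m : ℕ) (x : GF (2*m)) : GF (2*m) := ∑ j ∈ Finset.range m, x ^ 2 ^ j

/-- The subfield `K_m = {x : x^(2^m) = x}` of `GF (2*m)`, as a finset. -/
def Km (m : ℕ) : Finset (GF (2*m)) := Finset.univ.filter (fun x => x ^ 2 ^ m = x)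

/-- `max_{a ≠ 0, ω} |W_{F_a}(ω)|` for a vectorial function `F` on `GF (2*m)`. -/
def maxAbsW (m : ℕ) (F : GF (2*m) → GF (2*m)) : ℕ :=
  Finset.sup ((Finset.univ.filter (fun a : GF (2*m) => a ≠ 0)) ×ˢ (Finset.univ : Finset (GF (2*m))))
    (fun p => (walsh (2*m) (fun x => atr (2*m) (p.1 * F x)) p.2).natAbs)

/-- The nonlinearity `N_F = 2^(n-1) - (1/2) max_{a ≠ 0, ω} |W_{F_a}(ω)|`, `n = 2m`. -/
def nlin (m : ℕ) (F : GF (2*m) → GF (2*m)) : ℚ :=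
  2 ^ (2*m - 1) - (maxAbsW m F : ℚ) / 2


namespace S8

lemma gf_card (k : ℕ) (hk : k ≠ 0) : Fintype.card (GF k) = 2 ^ k := by
  rw [← Nat.card_eq_fintype_card, GaloisField.card 2 k hk]

lemma gf_pow_card (k : ℕ) (hk : k ≠ 0) (x : GF k) : x ^ 2 ^ k = x := by
  have := FiniteField.pow_card x
  rwa [gf_card k hk] at this

lemma addself {k : ℕ} (x : GF k) : x + x = 0 := CharTwo.add_self_eq_zero x

lemma frob_add {k : ℕ} (x y : GF k) (j : ℕ) : (x + y) ^ 2 ^ j = x ^ 2 ^ j + y ^ 2 ^ j :=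
  add_pow_char_pow x y 2 j

lemma atr_add (k : ℕ) (x y : GF k) : atr k (x + y) = atr k x + atr k y := by
  unfold atr
  rw [← Finset.sum_add_distrib]
  exact Finset.sum_congr rfl fun j _ => frob_add x y j

lemma atr_zero (k : ℕ) : atr k 0 = 0 := by
  unfold atr
  refine Finset.sum_eq_zero fun j _ => ?_
  exact zero_pow (pow_ne_zero j two_ne_zero)

lemma trKm_add (m : ℕ) (x y : GF (2*m)) : trKm m (x + y) = trKm m x + trKm m y := by
  unfold trKm
  rw [← Finset.sum_add_distrib]
  exact Finset.sum_congr rfl fun j _ => frob_add x y j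

lemma trKm_zero (m : ℕ) : trKm m 0 = 0 := by
  unfold trKm
  refine Finset.sum_eq_zero fun j _ => ?_
  exact zero_pow (pow_ne_zero j two_ne_zero)

/-- squaring shifts the Frobenius sum -/
lemma sq_shift {k : ℕ} (K : ℕ) (x : GF k) :
    (∑ j ∈ Finset.range K, x ^ 2 ^ j) ^ 2 = ∑ j ∈ Finset.range K, (x ^ 2) ^ 2 ^ j := by
  rw [sum_pow_char]
  refine Finset.sum_congr rfl fun j _ => ?_
  rw [← pow_mul, ← pow_mul, mul_comm]

lemma sum_frob_shift {k : ℕ} (K : ℕ) (x : GF k) :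
    ∑ j ∈ Finset.range K, (x ^ 2) ^ 2 ^ j
      = (∑ j ∈ Finset.range K, x ^ 2 ^ j) + x ^ 2 ^ K - x := by
  have h1 : ∀ j : ℕ, (x ^ 2) ^ 2 ^ j = x ^ 2 ^ (j + 1) := by
    intro j; rw [← pow_mul, pow_succ, mul_comm]
  calc ∑ j ∈ Finset.range K, (x ^ 2) ^ 2 ^ j
      = ∑ j ∈ Finset.range K, x ^ 2 ^ (j+1) := Finset.sum_congr rfl fun j _ => h1 j
    _ = (∑ j ∈ Finset.range (K+1), x ^ 2 ^ j) - x ^ 2 ^ 0 := by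
        rw [Finset.sum_range_succ' (fun j => x ^ 2 ^ j) K]; ring
    _ = (∑ j ∈ Finset.range K, x ^ 2 ^ j) + x ^ 2 ^ K - x := by
        rw [Finset.sum_range_succ]; ring_nf

lemma atr_sq (k : ℕ) (hk : k ≠ 0) (x : GF k) : atr k x ^ 2 = atr k x := by
  unfold atr
  rw [sq_shift, sum_frob_shift, gf_pow_card k hk]
  ring

lemma sq_eq_self_01 {k : ℕ} {t : GF k} (h : t ^ 2 = t) : t = 0 ∨ t = 1 := by
  have : t * (t - 1) = 0 := by ring_nf; rw [pow_two] at h ⊢; rw [h]; ring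
  rcases mul_eq_zero.1 this with h0 | h1
  · exact Or.inl h0
  · exact Or.inr (by linear_combination h1)

lemma atr01 (k : ℕ) (hk : k ≠ 0) (x : GF k) : atr k x = 0 ∨ atr k x = 1 :=
  sq_eq_self_01 (atr_sq k hk x)

lemma trKm_sq (m : ℕ) {x : GF (2*m)} (hx : x ^ 2 ^ m = x) : trKm m x ^ 2 = trKm m x := by
  unfold trKm
  rw [sq_shift, sum_frob_shift, hx]
  ring

lemma trKm01 (m : ℕ) {x : GF (2*m)} (hx : x ^ 2 ^ m = x) : trKm m x = 0 ∨ trKm m x = 1 :=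
  sq_eq_self_01 (trKm_sq m hx)

/-- Tr_{2m/2} = Tr_m ∘ (relative trace) -/
lemma atr_eq_trKm (m : ℕ) (x : GF (2*m)) : atr (2*m) x = trKm m (x + x ^ 2 ^ m) := by
  have h2 : ∑ j ∈ Finset.Ico m (2*m), x ^ 2 ^ j = ∑ j ∈ Finset.range m, x ^ 2 ^ (m + j) := by
    rw [Finset.sum_Ico_eq_sum_range, (by omega : 2*m - m = m)]
  unfold atr trKm
  rw [Finset.range_eq_Ico, ← Finset.sum_Ico_consecutive (fun j => x ^ 2 ^ j)
    (Nat.zero_le m) (by omega : m ≤ 2*m), h2, ← Finset.range_eq_Ico,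
    ← Finset.sum_add_distrib]
  refine Finset.sum_congr rfl fun j _ => ?_
  rw [frob_add]
  congr 1
  rw [← pow_mul, ← pow_add]

lemma atr_of_Km (m : ℕ) {z : GF (2*m)} (hz : z ^ 2 ^ m = z) : atr (2*m) z = 0 := by
  rw [atr_eq_trKm, hz, addself, trKm_zero]


lemma chi_zero (k : ℕ) : chi k 0 = 1 := if_pos rfl

lemma chi_one (k : ℕ) : chi k 1 = -1 := if_neg one_ne_zero

lemma chi_mul_self (k : ℕ) (x : GF k) : chi k x * chi k x = 1 := by
  unfold chi; split <;> ring

lemma chi_add {k : ℕ} {a b : GF k} (ha : a = 0 ∨ a = 1) (hb : b = 0 ∨ b = 1) :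
    chi k (a + b) = chi k a * chi k b := by
  rcases ha with rfl | rfl <;> rcases hb with rfl | rfl <;>
    simp [chi, one_ne_zero, addself]

lemma chi_add_one {k : ℕ} {a : GF k} (ha : a = 0 ∨ a = 1) :
    chi k (a + 1) = - chi k a := by
  rcases ha with rfl | rfl <;> simp [chi, one_ne_zero, addself]

lemma add01 {k : ℕ} {a b : GF k} (ha : a = 0 ∨ a = 1) (hb : b = 0 ∨ b = 1) :
    a + b = 0 ∨ a + b = 1 := by
  rcases ha with rfl | rfl <;> rcases hb with rfl | rfl <;> simp [addself]

lemma mul01 {k : ℕ} {a b : GF k} (ha : a = 0 ∨ a = 1) (hb : b = 0 ∨ b = 1) :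
    a * b = 0 ∨ a * b = 1 := by
  rcases ha with rfl | rfl <;> rcases hb with rfl | rfl <;> simp

lemma atr_nondeg {m : ℕ} (hm : 1 ≤ m) {a : GF (2*m)} (ha : a ≠ 0) :
    ∃ x, atr (2*m) (a * x) = 1 := by
  have hk : 2*m ≠ 0 := by omega
  by_contra h
  push_neg at h
  have h0 : ∀ x, atr (2*m) (a * x) = 0 := fun x =>
    (atr01 _ hk (a*x)).resolve_right (h x)
  set P : Polynomial (GF (2*m)) :=
    ∑ j ∈ Finset.range (2*m), Polynomial.C (a ^ 2 ^ j) * Polynomial.X ^ 2 ^ j with hP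
  have heval : ∀ x : GF (2*m), P.eval x = 0 := by
    intro x
    have h1 : P.eval x = atr (2*m) (a * x) := by
      rw [hP]
      simp [Polynomial.eval_finset_sum, atr, mul_pow]
    rw [h1, h0]
  have hdeg : P.natDegree < Fintype.card (GF (2*m)) := by
    rw [gf_card _ hk]
    have h2 : P.natDegree ≤ 2 ^ (2*m - 1) := by
      apply Polynomial.natDegree_sum_le_of_forall_le
      intro j hj
      refine (Polynomial.natDegree_C_mul_X_pow_le _ _).trans ?_
      exact Nat.pow_le_pow_right (by norm_num) (by have := Finset.mem_range.1 hj; omega)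
    calc P.natDegree ≤ 2^(2*m-1) := h2
      _ < 2^(2*m) := Nat.pow_lt_pow_right (by norm_num) (by omega)
  have hP0 : P = 0 := Polynomial.eq_zero_of_natDegree_lt_card_of_eval_eq_zero P
    Function.injective_id (fun x => heval x) hdeg
  have hc : P.coeff (2 ^ (2*m-1)) = a ^ 2 ^ (2*m-1) := by
    rw [hP, Polynomial.finset_sum_coeff]
    rw [Finset.sum_eq_single (2*m-1)]
    · rw [Polynomial.coeff_C_mul, Polynomial.coeff_X_pow, if_pos rfl, mul_one]
    · intro j hj hne
      rw [Polynomial.coeff_C_mul, Polynomial.coeff_X_pow, if_neg, mul_zero]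
      intro hEq
      exact hne (Nat.pow_right_injective (le_refl 2) hEq).symm
    · intro habs
      exact absurd (Finset.mem_range.2 (by omega)) habs
  rw [hP0, Polynomial.coeff_zero] at hc
  exact pow_ne_zero _ ha hc.symm

lemma sum_chi_atr {m : ℕ} (hm : 1 ≤ m) {a : GF (2*m)} (ha : a ≠ 0) :
    ∑ x : GF (2*m), chi (2*m) (atr (2*m) (a * x)) = 0 := by
  have hk : 2*m ≠ 0 := by omega
  obtain ⟨x₀, hx₀⟩ := atr_nondeg hm ha
  have e1 : ∑ x : GF (2*m), chi (2*m) (atr (2*m) (a * (x + x₀)))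
      = ∑ x : GF (2*m), chi (2*m) (atr (2*m) (a * x)) :=
    Equiv.sum_comp (Equiv.addRight x₀) (fun y => chi (2*m) (atr (2*m) (a * y)))
  have e2 : ∑ x : GF (2*m), chi (2*m) (atr (2*m) (a * (x + x₀)))
      = - ∑ x : GF (2*m), chi (2*m) (atr (2*m) (a * x)) := by
    rw [← Finset.sum_neg_distrib]
    refine Finset.sum_congr rfl fun x _ => ?_
    rw [mul_add, atr_add, hx₀, chi_add_one (atr01 _ hk _)]
  have := e1.symm.trans e2
  linarith

lemma card_pow_eq_one {m : ℕ} (hm : 1 ≤ m) {e : ℕ} (he : 0 < e)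
    (hdvd : e ∣ 2 ^ (2*m) - 1) :
    (Finset.univ.filter fun x : GF (2*m) => x ^ e = 1).card = e := by
  have hk : 2*m ≠ 0 := by omega
  have h4 : 4 ≤ 2^(2*m) := by
    calc (4:ℕ) = 2^2 := by norm_num
    _ ≤ 2^(2*m) := Nat.pow_le_pow_right (by norm_num) (by omega)
  obtain ⟨g, hg⟩ := IsCyclic.exists_generator (α := (GF (2*m))ˣ)
  have hord : orderOf ((g : GF (2*m))) = 2 ^ (2*m) - 1 := by
    rw [orderOf_units, orderOf_eq_card_of_forall_mem_zpowers hg, Nat.card_eq_fintype_card,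
      Fintype.card_units, gf_card _ hk]
  have hprim : IsPrimitiveRoot ((g : GF (2*m))) (2 ^ (2*m) - 1) := by
    have := IsPrimitiveRoot.orderOf ((g : GF (2*m)))
    rwa [hord] at this
  obtain ⟨c, hc⟩ := hdvd
  have hprim2 : IsPrimitiveRoot ((g : GF (2*m)) ^ c) e := by
    refine hprim.pow (by omega) ?_
    rw [hc]; ring
  have hcard := hprim2.card_nthRootsFinset
  have hset : (Finset.univ.filter fun x : GF (2*m) => x ^ e = 1)
      = Polynomial.nthRootsFinset e (1 : GF (2*m)) := by
    ext x
    simp [Polynomial.mem_nthRootsFinset he]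
  rw [hset, hcard]

lemma pow_sub_one_facts (m : ℕ) (hm : 1 ≤ m) :
    (2^m - 1) * (2^m + 1) = 2^(2*m) - 1 ∧ 2 ≤ 2^m := by
  have h2 : 2^(2*m) = 2^m * 2^m := by rw [two_mul, pow_add]
  have h1 : 2 ≤ 2^m := by
    calc (2:ℕ) = 2^1 := by norm_num
    _ ≤ 2^m := Nat.pow_le_pow_right (by norm_num) hm
  constructor
  · rw [h2]
    zify [show 1 ≤ 2^m by omega, show 1 ≤ 2^m * 2^m by nlinarith]
    ring
  · exact h1

lemma card_Km {m : ℕ} (hm : 1 ≤ m) : (Km m).card = 2 ^ m := by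
  obtain ⟨hkey, h2⟩ := pow_sub_one_facts m hm
  have he : 0 < 2^m - 1 := by omega
  have hdvd : (2^m - 1) ∣ 2^(2*m) - 1 := ⟨2^m + 1, hkey.symm⟩
  have hcount := card_pow_eq_one hm he hdvd
  have hKm : Km m = insert (0 : GF (2*m))
      (Finset.univ.filter fun x : GF (2*m) => x ^ (2^m - 1) = 1) := by
    ext x
    simp only [Km, Finset.mem_insert, Finset.mem_filter, Finset.mem_univ, true_and]
    have hexp : 2^m - 1 + 1 = 2^m := by omega
    constructor
    · intro hx
      by_cases h0 : x = 0
      · exact Or.inl h0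
      · right
        apply mul_right_cancel₀ h0
        rw [one_mul, ← pow_succ, hexp, hx]
    · rintro (rfl | hx)
      · exact zero_pow (pow_ne_zero m two_ne_zero)
      · rw [← hexp, pow_succ, hx, one_mul]
  rw [hKm, Finset.card_insert_of_notMem, hcount]
  · omega
  · simp only [Finset.mem_filter, Finset.mem_univ, true_and]
    rw [zero_pow (by omega : 2^m - 1 ≠ 0)]
    exact zero_ne_one

lemma trKm_nondeg {m : ℕ} (hm : 1 ≤ m) {l : GF (2*m)} (hl0 : l ≠ 0) (hl : l ^ 2^m = l) :
    ∃ y, y ^ 2^m = y ∧ trKm m (l * y) = 1 := by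
  by_contra h
  push_neg at h
  have h0 : ∀ y ∈ Km m, trKm m (l * y) = 0 := by
    intro y hy
    have hy' : y ^ 2^m = y := (Finset.mem_filter.1 hy).2
    have hly : (l * y) ^ 2^m = l * y := by rw [mul_pow, hl, hy']
    exact (trKm01 m hly).resolve_right (h y hy')
  set P : Polynomial (GF (2*m)) :=
    ∑ j ∈ Finset.range m, Polynomial.C (l ^ 2 ^ j) * Polynomial.X ^ 2 ^ j with hP
  have heval : ∀ y ∈ Km m, P.eval y = 0 := by
    intro y hy
    have h1 : P.eval y = trKm m (l * y) := by
      rw [hP]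
      simp [Polynomial.eval_finset_sum, trKm, mul_pow]
    rw [h1, h0 y hy]
  have hdeg : P.natDegree < (Km m).card := by
    rw [card_Km hm]
    have h2 : P.natDegree ≤ 2 ^ (m - 1) := by
      apply Polynomial.natDegree_sum_le_of_forall_le
      intro j hj
      refine (Polynomial.natDegree_C_mul_X_pow_le _ _).trans ?_
      exact Nat.pow_le_pow_right (by norm_num) (by have := Finset.mem_range.1 hj; omega)
    calc P.natDegree ≤ 2^(m-1) := h2
      _ < 2^m := Nat.pow_lt_pow_right (by norm_num) (by omega)
  have hP0 : P = 0 :=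
    Polynomial.eq_zero_of_natDegree_lt_card_of_eval_eq_zero' P (Km m) heval hdeg
  have hc : P.coeff (2 ^ (m-1)) = l ^ 2 ^ (m-1) := by
    rw [hP, Polynomial.finset_sum_coeff]
    rw [Finset.sum_eq_single (m-1)]
    · rw [Polynomial.coeff_C_mul, Polynomial.coeff_X_pow, if_pos rfl, mul_one]
    · intro j hj hne
      rw [Polynomial.coeff_C_mul, Polynomial.coeff_X_pow, if_neg, mul_zero]
      intro hEq
      exact hne (Nat.pow_right_injective (le_refl 2) hEq).symm
    · intro habs
      exact absurd (Finset.mem_range.2 (by omega)) habs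
  rw [hP0, Polynomial.coeff_zero] at hc
  exact pow_ne_zero _ hl0 hc.symm

lemma sum_chi_Km {m : ℕ} (hm : 1 ≤ m) {l : GF (2*m)} (hl0 : l ≠ 0) (hl : l ^ 2^m = l) :
    ∑ y ∈ Km m, chi (2*m) (trKm m (l * y)) = 0 := by
  obtain ⟨y₀, hy₀K, hy₀⟩ := trKm_nondeg hm hl0 hl
  have hmem : ∀ y : GF (2*m), y ∈ Km m ↔ y ^ 2^m = y := by
    intro y; simp [Km]
  have h01 : ∀ y ∈ Km m, trKm m (l * y) = 0 ∨ trKm m (l * y) = 1 := by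
    intro y hy
    exact trKm01 m (by rw [mul_pow, hl, (hmem y).1 hy])
  have e1 : ∑ y ∈ Km m, chi (2*m) (trKm m (l * (y + y₀)))
      = ∑ y ∈ Km m, chi (2*m) (trKm m (l * y)) := by
    apply Finset.sum_nbij' (fun y => y + y₀) (fun y => y + y₀)
    · intro a ha
      rw [hmem] at ha ⊢
      rw [frob_add, ha, hy₀K]
    · intro a ha
      rw [hmem] at ha ⊢
      rw [frob_add, ha, hy₀K]
    · intro a _
      rw [add_assoc, addself, add_zero]
    · intro a _
      rw [add_assoc, addself, add_zero]
    · intro a _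
      rfl
  have e2 : ∑ y ∈ Km m, chi (2*m) (trKm m (l * (y + y₀)))
      = - ∑ y ∈ Km m, chi (2*m) (trKm m (l * y)) := by
    rw [← Finset.sum_neg_distrib]
    refine Finset.sum_congr rfl fun y hy => ?_
    rw [mul_add, trKm_add, hy₀, chi_add_one (h01 y hy)]
  have := e1.symm.trans e2
  linarith

lemma gold0 {m : ℕ} (hm : 1 ≤ m) {l : GF (2*m)} (hl0 : l ≠ 0) (hl : l ^ 2^m = l) :
    ∑ x : GF (2*m), chi (2*m) (trKm m (l * x ^ (2^m+1))) = -(2^m : ℤ) := by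
  obtain ⟨hkey, h2⟩ := pow_sub_one_facts m hm
  have hk : 2*m ≠ 0 := by omega
  set d := 2^m + 1 with hd
  set f : GF (2*m) → ℤ := fun y => chi (2*m) (trKm m (l * y)) with hf
  have hnorm : ∀ x : GF (2*m), (x^d) ^ 2^m = x^d := by
    intro x
    rw [← pow_mul, hd, (by rw [two_mul, pow_add]; ring : (2^m+1) * 2^m = 2^(2*m) + 2^m),
      pow_add, gf_pow_card _ hk, ← pow_succ']
  set s : Finset (GF (2*m)) := Finset.univ.filter (fun x : GF (2*m) => x ≠ 0) with hs
  set t : Finset (GF (2*m)) := (Km m).erase 0 with ht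
  have hscard : s.card = 2^(2*m) - 1 := by
    rw [hs, Finset.filter_ne', Finset.card_erase_of_mem (Finset.mem_univ 0),
      Finset.card_univ, gf_card _ hk]
  have htcard : t.card = 2^m - 1 := by
    rw [ht, Finset.card_erase_of_mem, card_Km hm]
    simp only [Km, Finset.mem_filter, Finset.mem_univ, true_and]
    exact zero_pow (pow_ne_zero m two_ne_zero)
  have hmaps : ∀ x ∈ s, x^d ∈ t := by
    intro x hx
    have hxne : x ≠ 0 := (Finset.mem_filter.1 hx).2
    rw [ht, Finset.mem_erase]
    refine ⟨pow_ne_zero _ hxne, ?_⟩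
    simp only [Km, Finset.mem_filter, Finset.mem_univ, true_and]
    exact hnorm x
  have hcard1 : (Finset.univ.filter (fun x : GF (2*m) => x^d = 1)).card = d :=
    card_pow_eq_one hm (by omega) ⟨2^m - 1, by rw [← hkey]; ring⟩
  -- every nonempty fiber has cardinality d
  have hfibd : ∀ y ∈ t, ∀ x₀ ∈ s.filter (fun x => x^d = y),
      (s.filter (fun x => x^d = y)).card = d := by
    intro y hy x₀ hx₀
    obtain ⟨hx₀s, hx₀d⟩ := Finset.mem_filter.1 hx₀
    have hx₀ne : x₀ ≠ 0 := (Finset.mem_filter.1 hx₀s).2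
    have hbij : (s.filter (fun x => x^d = y)).card
        = (Finset.univ.filter (fun x : GF (2*m) => x^d = 1)).card := by
      apply Finset.card_bij' (fun (x : GF (2*m)) _ => x₀⁻¹ * x) (fun (u : GF (2*m)) _ => x₀ * u)
      · intro x hx
        have hxd : x ^ d = y := (Finset.mem_filter.1 hx).2
        have hyne : y ≠ 0 := (Finset.mem_erase.1 hy).1
        rw [Finset.mem_filter]
        refine ⟨Finset.mem_univ _, ?_⟩
        rw [mul_pow, inv_pow, hx₀d, hxd]
        field_simp
      · intro u hu
        have hu1 : u ^ d = 1 := (Finset.mem_filter.1 hu).2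
        have hune : u ≠ 0 := fun h0 => by
          rw [h0, zero_pow (by omega : d ≠ 0)] at hu1; exact zero_ne_one hu1
        rw [Finset.mem_filter]
        refine ⟨?_, by rw [mul_pow, hx₀d, hu1, mul_one]⟩
        rw [hs, Finset.mem_filter]
        exact ⟨Finset.mem_univ _, mul_ne_zero hx₀ne hune⟩
      · intro x hx
        field_simp
      · intro u hu
        field_simp
    rw [hbij, hcard1]
  have hallfib : ∀ y ∈ t, (s.filter (fun x => x^d = y)).card = d := by
    by_contra hcon
    push_neg at hcon
    obtain ⟨y₀, hy₀, hne⟩ := hcon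
    have hle : ∀ y ∈ t, (s.filter (fun x => x^d = y)).card ≤ d := by
      intro y hy
      rcases Finset.eq_empty_or_nonempty (s.filter (fun x => x^d = y)) with hE | ⟨x₀, hx₀⟩
      · rw [hE, Finset.card_empty]; omega
      · rw [hfibd y hy x₀ hx₀]
    have hlt : (s.filter (fun x => x^d = y₀)).card < d := by
      rcases Finset.eq_empty_or_nonempty (s.filter (fun x => x^d = y₀)) with hE | ⟨x₀, hx₀⟩
      · rw [hE, Finset.card_empty]; omega
      · exact absurd (hfibd y₀ hy₀ x₀ hx₀) hne
    have hsum := Finset.card_eq_sum_card_fiberwise hmaps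
    have hstrict : ∑ y ∈ t, (s.filter (fun x => x^d = y)).card < ∑ y ∈ t, d :=
      Finset.sum_lt_sum hle ⟨y₀, hy₀, hlt⟩
    rw [← hsum, Finset.sum_const, smul_eq_mul, hscard, htcard] at hstrict
    rw [← hkey] at hstrict
    have : (2^m - 1) * (2^m + 1) = (2^m - 1) * d := by rw [hd]
    omega
  -- now compute the sum
  have hsplit : ∑ x : GF (2*m), f (x^d) = f 0 + ∑ x ∈ s, f (x^d) := by
    have h01 := Finset.sum_filter_add_sum_filter_not Finset.univ (fun x : GF (2*m) => x = 0)
      (fun x => f (x^d))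
    have hone : Finset.univ.filter (fun x : GF (2*m) => x = 0) = {0} := by ext x; simp
    have hnot : Finset.univ.filter (fun x : GF (2*m) => ¬ x = 0) = s := by
      rw [hs]
    rw [← h01, hone, Finset.sum_singleton, zero_pow (by omega : d ≠ 0), hnot]
  have hfiber := Finset.sum_fiberwise_of_maps_to hmaps (fun x => f (x^d))
  have hinner : ∀ y ∈ t, ∑ x ∈ s.filter (fun x => x^d = y), f (x^d) = (d : ℤ) * f y := by
    intro y hy
    have : ∑ x ∈ s.filter (fun x => x^d = y), f (x^d)
        = ∑ x ∈ s.filter (fun x => x^d = y), f y := by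
      refine Finset.sum_congr rfl fun x hx => ?_
      rw [(Finset.mem_filter.1 hx).2]
    rw [this, Finset.sum_const, hallfib y hy, nsmul_eq_mul]
  have hsumKm : ∑ y ∈ Km m, f y = 0 := sum_chi_Km hm hl0 hl
  have hf0 : f 0 = 1 := by
    rw [hf]
    simp only [mul_zero, trKm_zero, chi_zero]
  have h0Km : (0 : GF (2*m)) ∈ Km m := by
    simp only [Km, Finset.mem_filter, Finset.mem_univ, true_and]
    exact zero_pow (pow_ne_zero m two_ne_zero)
  have hsumt : ∑ y ∈ t, f y = -1 := by
    have h := Finset.sum_erase_add (Km m) f h0Km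
    rw [hf0, hsumKm] at h
    rw [ht]
    linarith
  calc ∑ x : GF (2*m), chi (2*m) (trKm m (l * x ^ (2^m+1)))
      = ∑ x : GF (2*m), f (x^d) := rfl
    _ = f 0 + ∑ x ∈ s, f (x^d) := hsplit
    _ = f 0 + ∑ y ∈ t, ∑ x ∈ s.filter (fun x => x^d = y), f (x^d) := by rw [hfiber]
    _ = f 0 + ∑ y ∈ t, (d : ℤ) * f y := by
        rw [Finset.sum_congr rfl hinner]
    _ = f 0 + (d:ℤ) * ∑ y ∈ t, f y := by rw [Finset.mul_sum]
    _ = 1 + (d:ℤ) * (-1) := by rw [hf0, hsumt]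
    _ = -(2^m : ℤ) := by rw [hd]; push_cast; ring

lemma norm_mem_Km {m : ℕ} (hm : 1 ≤ m) (x : GF (2*m)) :
    (x ^ (2^m+1)) ^ 2^m = x ^ (2^m+1) := by
  rw [← pow_mul, (by rw [two_mul, pow_add]; ring : (2^m+1) * 2^m = 2^(2*m) + 2^m),
    pow_add, gf_pow_card _ (by omega), ← pow_succ']

lemma pow_pow_card {m : ℕ} (hm : 1 ≤ m) (z : GF (2*m)) : (z ^ 2^m) ^ 2^m = z := by
  rw [← pow_mul, (by rw [two_mul, pow_add] : 2^m * 2^m = 2^(2*m)), gf_pow_card _ (by omega)]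

lemma goldW {m : ℕ} (hm : 1 ≤ m) {l : GF (2*m)} (hl0 : l ≠ 0) (hl : l ^ 2^m = l)
    (ν : GF (2*m)) :
    ∑ x : GF (2*m), chi (2*m) (trKm m (l * x ^ (2^m+1)) + atr (2*m) (ν * x))
      = chi (2*m) (trKm m (l⁻¹ * ν ^ (2^m+1))) * (-(2^m : ℤ)) := by
  have hk : 2*m ≠ 0 := by omega
  set c := (ν * l⁻¹) ^ 2^m with hc
  have hlinv : (l⁻¹) ^ 2^m = l⁻¹ := by rw [inv_pow, hl]
  have hlc : l * c ^ 2^m = ν := by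
    rw [hc, pow_pow_card hm]
    field_simp
  have hνc : ν * c = l⁻¹ * ν ^ (2^m+1) := by
    calc ν * c = ν * (ν^(2^m) * l⁻¹) := by rw [hc, mul_pow, hlinv]
    _ = l⁻¹ * ν^(2^m+1) := by rw [pow_succ]; ring
  have hlcd : l * c ^ (2^m+1) = l⁻¹ * ν ^ (2^m+1) := by
    calc l * c^(2^m+1) = l * (c^(2^m) * c) := by rw [pow_succ]
    _ = (l * c^(2^m)) * c := by ring
    _ = ν * c := by rw [hlc]
    _ = l⁻¹ * ν^(2^m+1) := hνc
  have hKmν : (l⁻¹ * ν^(2^m+1)) ^ 2^m = l⁻¹ * ν^(2^m+1) := by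
    rw [mul_pow, hlinv, norm_mem_Km hm]
  have h01b : trKm m (l⁻¹ * ν^(2^m+1)) = 0 ∨ trKm m (l⁻¹ * ν^(2^m+1)) = 1 :=
    trKm01 m hKmν
  have h01a : ∀ x : GF (2*m), trKm m (l * x^(2^m+1)) = 0 ∨ trKm m (l * x^(2^m+1)) = 1 := by
    intro x
    exact trKm01 m (by rw [mul_pow, hl, norm_mem_Km hm])
  have hpt : ∀ x : GF (2*m),
      trKm m (l * (x + c) ^ (2^m+1)) + atr (2*m) (ν * (x + c))
        = trKm m (l * x ^ (2^m+1)) + trKm m (l⁻¹ * ν ^ (2^m+1)) := by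
    intro x
    have e1 : trKm m (l * (x + c) ^ (2^m+1))
        = trKm m (l * x^(2^m+1)) + trKm m (l * c^(2^m+1))
          + trKm m (l * (x^(2^m) * c + x * c^(2^m))) := by
      rw [← trKm_add, ← trKm_add]
      congr 1
      rw [pow_succ, frob_add, pow_succ, pow_succ]
      ring
    have e2 : trKm m (l * c^(2^m+1)) = trKm m (l⁻¹ * ν^(2^m+1)) := by rw [hlcd]
    have e3 : atr (2*m) (ν * (x + c)) = atr (2*m) (ν * x) + atr (2*m) (ν * c) := by
      rw [mul_add, atr_add]
    have e4 : atr (2*m) (ν * c) = 0 := by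
      rw [hνc]
      exact atr_of_Km m hKmν
    have e5 : atr (2*m) (ν * x) = trKm m (l * (x^(2^m) * c + x * c^(2^m))) := by
      have h1 : atr (2*m) (ν * x) = trKm m (ν * x + (ν * x)^(2^m)) := atr_eq_trKm _ _
      have h2 : (ν * x) ^ 2^m = l * (x^(2^m) * c) := by
        conv_lhs => rw [← hlc]
        rw [mul_pow, mul_pow, hl, pow_pow_card hm]
        ring
      rw [h1, h2]
      congr 1
      conv_lhs => rw [← hlc]
      ring
    have e6 : trKm m (l * (x^(2^m) * c + x * c^(2^m)))
        + trKm m (l * (x^(2^m) * c + x * c^(2^m))) = 0 := addself _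
    linear_combination e1 + e2 + e3 + e4 + e5 + e6
  have hshift : ∑ x : GF (2*m), chi (2*m) (trKm m (l * x^(2^m+1)) + atr (2*m) (ν * x))
      = ∑ x : GF (2*m), chi (2*m) (trKm m (l * (x+c)^(2^m+1)) + atr (2*m) (ν * (x+c))) :=
    (Equiv.sum_comp (Equiv.addRight c)
      (fun y => chi (2*m) (trKm m (l * y^(2^m+1)) + atr (2*m) (ν * y)))).symm
  rw [hshift]
  have hterm : ∀ x : GF (2*m),
      chi (2*m) (trKm m (l * (x+c)^(2^m+1)) + atr (2*m) (ν * (x+c)))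
        = chi (2*m) (trKm m (l * x^(2^m+1))) * chi (2*m) (trKm m (l⁻¹ * ν^(2^m+1))) := by
    intro x
    rw [hpt x, chi_add (h01a x) h01b]
  rw [Finset.sum_congr rfl (fun x _ => hterm x), ← Finset.sum_mul, gold0 hm hl0 hl]
  ring

lemma T_shift {m : ℕ} (hm : 1 ≤ m) {l : GF (2*m)} (hl : l ^ 2^m = l) (ω v : GF (2*m)) :
    trKm m (l * (ω + v)^(2^m+1))
      = trKm m (l * ω^(2^m+1)) + (atr (2*m) (l * v^(2^m) * ω) + trKm m (l * v^(2^m+1))) := by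
  have e1 : trKm m (l * (ω + v)^(2^m+1))
      = trKm m (l * ω^(2^m+1)) + trKm m (l * v^(2^m+1))
        + trKm m (l * (ω^(2^m) * v + ω * v^(2^m))) := by
    rw [← trKm_add, ← trKm_add]
    congr 1
    rw [pow_succ, frob_add, pow_succ, pow_succ]
    ring
  have e5 : atr (2*m) (l * v^(2^m) * ω) = trKm m (l * (ω^(2^m) * v + ω * v^(2^m))) := by
    rw [atr_eq_trKm]
    congr 1
    rw [mul_pow, mul_pow, hl, pow_pow_card hm]
    ring
  rw [e1, e5]
  ring

lemma chi_quad {k : ℕ} {b s t : GF k} (hb : b = 0 ∨ b = 1) (hs : s = 0 ∨ s = 1)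
    (ht : t = 0 ∨ t = 1) :
    2 * chi k (b + s * t) = chi k b + chi k (b + s) + chi k (b + t) - chi k (b + s + t) := by
  rcases hb with rfl|rfl <;> rcases hs with rfl|rfl <;> rcases ht with rfl|rfl <;>
    simp only [mul_one, mul_zero, one_mul, zero_mul, add_zero, zero_add, addself, chi] <;>
    norm_num [one_ne_zero]

lemma chi_prod {k : ℕ} {s t : GF k} (hs : s = 0 ∨ s = 1) (ht : t = 0 ∨ t = 1) :
    2 * chi k (s * t) = 1 + chi k s + chi k t - chi k s * chi k t := by
  rcases hs with rfl|rfl <;> rcases ht with rfl|rfl <;>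
    simp only [mul_one, mul_zero, one_mul, zero_mul, add_zero, zero_add, addself, chi] <;>
    norm_num [one_ne_zero]

end S8

open S8 in
/-- `F(x) = x^(2^m+1) + u₁·x·Tr_{2^n/2}(u₂x)` with
`u₁u₂^(2^m) ∈ K_m` and `Tr_{2^m/2}(u₁u₂^(2^m)) = 0`: every component `F_β`,
`β ∉ K_m`, is bent with `W_{F_β}(ω) = 2^m·(−1)^(F*_β(ω))`, `F*_β` as stated. -/
theorem stmt8 (m : ℕ) (hm : 1 ≤ m)
    (u₁ u₂ : GF (2*m))
    (hK : (u₁ * u₂ ^ 2 ^ m) ^ 2 ^ m = u₁ * u₂ ^ 2 ^ m)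
    (htr : trKm m (u₁ * u₂ ^ 2 ^ m) = 0)
    (F : GF (2*m) → GF (2*m))
    (hF : ∀ x, F x = x ^ (2 ^ m + 1) + u₁ * x * atr (2*m) (u₂ * x))
    (β : GF (2*m)) (hβ : β ^ 2 ^ m ≠ β)
    (lam : GF (2*m)) (hlam : lam = β + β ^ 2 ^ m) :
    (∀ ω, (walsh (2*m) (fun x => atr (2*m) (β * F x)) ω) ^ 2 = 2 ^ (2*m)) ∧
    (∀ ω, walsh (2*m) (fun x => atr (2*m) (β * F x)) ω
      = 2 ^ m * chi (2*m)
          (trKm m (lam⁻¹ * ω ^ (2 ^ m + 1)) + 1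
            + (atr (2*m) (lam⁻¹ * (β * u₁) ^ 2 ^ m * ω)
                + trKm m (lam⁻¹ * (β * u₁) ^ (2 ^ m + 1)))
              * (atr (2*m) (lam⁻¹ * u₂ ^ 2 ^ m * ω)
                + trKm m (lam⁻¹ * u₂ ^ (2 ^ m + 1))))) := by

  have hk : 2*m ≠ 0 := by omega
  have hl : lam ^ 2^m = lam := by
    rw [hlam, frob_add, pow_pow_card hm]
    ring
  have hl0 : lam ≠ 0 := by
    intro h0
    apply hβ
    have h1 : (0 : GF (2*m)) = β + β ^ 2^m := by rw [← h0, hlam]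
    linear_combination - h1 - addself β
  have hlinv : (lam⁻¹) ^ 2^m = lam⁻¹ := by rw [inv_pow, hl]
  have hlinv0 : lam⁻¹ ≠ 0 := inv_ne_zero hl0
  -- 0/1-ness facts
  have hT01 : ∀ ν : GF (2*m), trKm m (lam⁻¹ * ν^(2^m+1)) = 0 ∨
      trKm m (lam⁻¹ * ν^(2^m+1)) = 1 := fun ν =>
    trKm01 m (by rw [mul_pow, hlinv, norm_mem_Km hm])
  have hA101 : ∀ ω : GF (2*m),
      (atr (2*m) (lam⁻¹ * (β*u₁)^(2^m) * ω) + trKm m (lam⁻¹ * (β*u₁)^(2^m+1))) = 0 ∨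
      (atr (2*m) (lam⁻¹ * (β*u₁)^(2^m) * ω) + trKm m (lam⁻¹ * (β*u₁)^(2^m+1))) = 1 :=
    fun ω => add01 (atr01 _ hk _) (hT01 (β*u₁))
  have hA201 : ∀ ω : GF (2*m),
      (atr (2*m) (lam⁻¹ * u₂^(2^m) * ω) + trKm m (lam⁻¹ * u₂^(2^m+1))) = 0 ∨
      (atr (2*m) (lam⁻¹ * u₂^(2^m) * ω) + trKm m (lam⁻¹ * u₂^(2^m+1))) = 1 :=
    fun ω => add01 (atr01 _ hk _) (hT01 u₂)
  -- splitting of the a-term for v = u₂ + β*u₁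
  have hsplit_a : ∀ ω : GF (2*m),
      atr (2*m) (lam⁻¹ * (u₂ + β*u₁)^(2^m) * ω) + trKm m (lam⁻¹ * (u₂ + β*u₁)^(2^m+1))
        = (atr (2*m) (lam⁻¹ * u₂^(2^m) * ω) + trKm m (lam⁻¹ * u₂^(2^m+1)))
          + (atr (2*m) (lam⁻¹ * (β*u₁)^(2^m) * ω) + trKm m (lam⁻¹ * (β*u₁)^(2^m+1))) := by
    intro ω
    have c1 : atr (2*m) (lam⁻¹ * (u₂ + β*u₁)^(2^m) * ω)
        = atr (2*m) (lam⁻¹ * u₂^(2^m) * ω) + atr (2*m) (lam⁻¹ * (β*u₁)^(2^m) * ω) := by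
      rw [← atr_add]
      congr 1
      rw [frob_add]
      ring
    have c2 : trKm m (lam⁻¹ * (u₂ + β*u₁)^(2^m+1))
        = trKm m (lam⁻¹ * u₂^(2^m+1)) + trKm m (lam⁻¹ * (β*u₁)^(2^m+1))
          + trKm m (lam⁻¹ * ((β*u₁) * u₂^(2^m) + (β*u₁)^(2^m) * u₂)) := by
      rw [← trKm_add, ← trKm_add]
      congr 1
      rw [pow_succ, frob_add, pow_succ, pow_succ]
      ring
    have c3 : trKm m (lam⁻¹ * ((β*u₁) * u₂^(2^m) + (β*u₁)^(2^m) * u₂))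
        = atr (2*m) (lam⁻¹ * (β*u₁) * u₂^(2^m)) := by
      have hz : (lam⁻¹ * (β*u₁) * u₂^(2^m)) ^ 2^m = lam⁻¹ * (β*u₁)^(2^m) * u₂ := by
        rw [mul_pow, mul_pow, hlinv, pow_pow_card hm]
      rw [atr_eq_trKm, hz]
      congr 1
      ring
    have c4 : atr (2*m) (lam⁻¹ * (β*u₁) * u₂^(2^m)) = 0 := by
      have harg : lam⁻¹ * (β*u₁) * u₂^(2^m) = lam⁻¹ * β * (u₁ * u₂^(2^m)) := by ring
      rw [harg, atr_eq_trKm]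
      have hz : (lam⁻¹ * β * (u₁ * u₂^(2^m))) ^ 2^m
          = lam⁻¹ * β^(2^m) * (u₁ * u₂^(2^m)) := by
        rw [mul_pow, mul_pow, hlinv, hK]
      rw [hz]
      have hsum : lam⁻¹ * β * (u₁ * u₂^(2^m)) + lam⁻¹ * β^(2^m) * (u₁ * u₂^(2^m))
          = u₁ * u₂^(2^m) := by
        have : lam⁻¹ * β * (u₁ * u₂^(2^m)) + lam⁻¹ * β^(2^m) * (u₁ * u₂^(2^m))
            = lam⁻¹ * lam * (u₁ * u₂^(2^m)) := by rw [hlam]; ring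
        rw [this, inv_mul_cancel₀ hl0, one_mul]
      rw [hsum, htr]
    linear_combination c1 + c2 + c3 + c4
  -- the key Walsh value computation
  have key : ∀ ω, walsh (2*m) (fun x => atr (2*m) (β * F x)) ω
      = 2 ^ m * chi (2*m)
          (trKm m (lam⁻¹ * ω ^ (2 ^ m + 1)) + 1
            + (atr (2*m) (lam⁻¹ * (β * u₁) ^ 2 ^ m * ω)
                + trKm m (lam⁻¹ * (β * u₁) ^ (2 ^ m + 1)))
              * (atr (2*m) (lam⁻¹ * u₂ ^ 2 ^ m * ω)
                + trKm m (lam⁻¹ * u₂ ^ (2 ^ m + 1)))) := by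
    intro ω
    -- pointwise expansion
    have hpoint : ∀ x : GF (2*m),
        (2:ℤ) * chi (2*m) (atr (2*m) (β * F x) + atr (2*m) (ω * x))
          = chi (2*m) (trKm m (lam * x^(2^m+1)) + atr (2*m) (ω * x))
            + chi (2*m) (trKm m (lam * x^(2^m+1)) + atr (2*m) ((ω+u₂) * x))
            + chi (2*m) (trKm m (lam * x^(2^m+1)) + atr (2*m) ((ω+β*u₁) * x))
            - chi (2*m) (trKm m (lam * x^(2^m+1)) + atr (2*m) ((ω+(u₂+β*u₁)) * x)) := by
      intro x
      have hFx : β * F x = β * x^(2^m+1) + (β*u₁*x) * atr (2*m) (u₂*x) := by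
        rw [hF x]; ring
      have h1 : atr (2*m) (β * x^(2^m+1)) = trKm m (lam * x^(2^m+1)) := by
        rw [atr_eq_trKm]
        congr 1
        rw [mul_pow, norm_mem_Km hm, hlam]
        ring
      have h2 : atr (2*m) ((β*u₁*x) * atr (2*m) (u₂*x))
          = atr (2*m) (u₂*x) * atr (2*m) (β*u₁*x) := by
        rcases atr01 _ hk (u₂*x) with h|h <;> rw [h]
        · rw [mul_zero, atr_zero, zero_mul]
        · rw [mul_one, one_mul]
      have hstepA : atr (2*m) (β * F x)
          = trKm m (lam * x^(2^m+1)) + atr (2*m) (u₂*x) * atr (2*m) (β*u₁*x) := by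
        rw [hFx, atr_add, h1, h2]
      have hb : trKm m (lam * x^(2^m+1)) + atr (2*m) (ω*x) = 0 ∨
          trKm m (lam * x^(2^m+1)) + atr (2*m) (ω*x) = 1 :=
        add01 (trKm01 m (by rw [mul_pow, hl, norm_mem_Km hm])) (atr01 _ hk _)
      have hq := chi_quad hb (atr01 _ hk (u₂*x)) (atr01 _ hk (β*u₁*x))
      have harg0 : atr (2*m) (β * F x) + atr (2*m) (ω * x)
          = (trKm m (lam * x^(2^m+1)) + atr (2*m) (ω*x))
            + atr (2*m) (u₂*x) * atr (2*m) (β*u₁*x) := by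
        rw [hstepA]; ring
      have harg2 : (trKm m (lam * x^(2^m+1)) + atr (2*m) (ω*x)) + atr (2*m) (u₂*x)
          = trKm m (lam * x^(2^m+1)) + atr (2*m) ((ω+u₂)*x) := by
        have hd : (ω+u₂)*x = ω*x + u₂*x := by ring
        rw [hd, atr_add]
        ring
      have harg1 : (trKm m (lam * x^(2^m+1)) + atr (2*m) (ω*x)) + atr (2*m) (β*u₁*x)
          = trKm m (lam * x^(2^m+1)) + atr (2*m) ((ω+β*u₁)*x) := by
        have hd : (ω+β*u₁)*x = ω*x + β*u₁*x := by ring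
        rw [hd, atr_add]
        ring
      have harg3 : ((trKm m (lam * x^(2^m+1)) + atr (2*m) (ω*x)) + atr (2*m) (u₂*x))
            + atr (2*m) (β*u₁*x)
          = trKm m (lam * x^(2^m+1)) + atr (2*m) ((ω+(u₂+β*u₁))*x) := by
        have hd : (ω+(u₂+β*u₁))*x = ω*x + (u₂*x + β*u₁*x) := by ring
        rw [hd, atr_add, atr_add]
        ring
      rw [harg0, hq, harg3, harg2, harg1]
    have h2W : 2 * walsh (2*m) (fun x => atr (2*m) (β * F x)) ω
        = (chi (2*m) (trKm m (lam⁻¹ * ω^(2^m+1)))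
          + chi (2*m) (trKm m (lam⁻¹ * (ω+u₂)^(2^m+1)))
          + chi (2*m) (trKm m (lam⁻¹ * (ω+β*u₁)^(2^m+1)))
          - chi (2*m) (trKm m (lam⁻¹ * (ω+(u₂+β*u₁))^(2^m+1)))) * (-(2^m:ℤ)) := by
      simp only [walsh]
      rw [Finset.mul_sum, Finset.sum_congr rfl (fun x _ => hpoint x),
        Finset.sum_sub_distrib, Finset.sum_add_distrib, Finset.sum_add_distrib,
        goldW hm hl0 hl ω, goldW hm hl0 hl (ω+u₂), goldW hm hl0 hl (ω+β*u₁),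
        goldW hm hl0 hl (ω+(u₂+β*u₁))]
      ring
    -- rewrite the shifted traces
    have hT2 := T_shift hm hlinv ω u₂
    have hT1 := T_shift hm hlinv ω (β*u₁)
    have hT12 := T_shift hm hlinv ω (u₂+β*u₁)
    rw [hsplit_a ω] at hT12
    rw [hT2, hT1, hT12] at h2W
    rw [chi_add (hT01 ω) (hA201 ω), chi_add (hT01 ω) (hA101 ω),
      chi_add (hT01 ω) (add01 (hA201 ω) (hA101 ω)), chi_add (hA201 ω) (hA101 ω)] at h2W
    -- compute the target
    have hRHS : 2 * ((2:ℤ) ^ m * chi (2*m)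
          (trKm m (lam⁻¹ * ω ^ (2 ^ m + 1)) + 1
            + (atr (2*m) (lam⁻¹ * (β * u₁) ^ 2 ^ m * ω)
                + trKm m (lam⁻¹ * (β * u₁) ^ (2 ^ m + 1)))
              * (atr (2*m) (lam⁻¹ * u₂ ^ 2 ^ m * ω)
                + trKm m (lam⁻¹ * u₂ ^ (2 ^ m + 1)))))
        = (chi (2*m) (trKm m (lam⁻¹ * ω^(2^m+1)))
          + chi (2*m) (trKm m (lam⁻¹ * ω^(2^m+1))) * chi (2*m)
              (atr (2*m) (lam⁻¹ * u₂^(2^m) * ω) + trKm m (lam⁻¹ * u₂^(2^m+1)))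
          + chi (2*m) (trKm m (lam⁻¹ * ω^(2^m+1))) * chi (2*m)
              (atr (2*m) (lam⁻¹ * (β*u₁)^(2^m) * ω) + trKm m (lam⁻¹ * (β*u₁)^(2^m+1)))
          - chi (2*m) (trKm m (lam⁻¹ * ω^(2^m+1))) * (chi (2*m)
              (atr (2*m) (lam⁻¹ * u₂^(2^m) * ω) + trKm m (lam⁻¹ * u₂^(2^m+1)))
              * chi (2*m)
              (atr (2*m) (lam⁻¹ * (β*u₁)^(2^m) * ω) + trKm m (lam⁻¹ * (β*u₁)^(2^m+1)))))
            * (-(2^m:ℤ)) := by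
      rw [chi_add (add01 (hT01 ω) (Or.inr rfl)) (mul01 (hA101 ω) (hA201 ω)),
        chi_add_one (hT01 ω)]
      have hp := chi_prod (hA101 ω) (hA201 ω)
      linear_combination (-(2:ℤ)^m * chi (2*m) (trKm m (lam⁻¹ * ω^(2^m+1)))) * hp
    linarith [h2W, hRHS]
  refine ⟨fun ω => ?_, key⟩
  rw [key ω, mul_pow, pow_two (chi (2*m) _), chi_mul_self, mul_one, ← pow_mul,
    mul_comm m 2]
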